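/- Let φ : [−π, π] → ℂ be continuously differentiable with φ(0) = 0. Then ∫_{−π}^{π} |φ(ψ)/(e^{iψ} − 1)|² dψ ≤ π² ∫_{−π}^{π} |φ′(ψ)|² dψ. -/

import Mathlib

open MeasureTheory Real

/-- The `n`-th Fourier coefficient of a `2π`-periodic function `f : ℝ → ℝ`. -/
noncomputable def fourierC (f : ℝ → ℝ) (n : ℤ) : ℂ :=
  (1 / (2 * π)) * ∫ θ in (0:ℝ)..(2 * π), (f θ : ℂ) * Complex.exp (-Complex.I * (n : ℂ) * (θ : ℂ))

/-- The Hilbert transform on the circle, sending `Σ cₙ e^{inθ}` to `Σ (−i sgn n) cₙ e^{inθ}`. -/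
noncomputable def hilbertT (f : ℝ → ℝ) (θ : ℝ) : ℝ :=
  (∑' n : ℤ, -Complex.I * ((n.sign : ℤ) : ℂ) * fourierC f n *
    Complex.exp (Complex.I * (n : ℂ) * (θ : ℂ))).re

open MeasureTheory Real Set
open scoped ENNReal NNReal

lemma sq_rpow_half (A : ℝ≥0∞) : (A ^ (1/(2:ℝ))) ^ (2:ℕ) = A := by
  rw [← ENNReal.rpow_natCast (A ^ _) 2, ← ENNReal.rpow_mul]
  norm_num

lemma cs_step {x : ℝ} (hx : 0 < x) (g : ℝ → ℝ≥0∞) (hg : Measurable g) :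
    (∫⁻ t in Set.Ioc 0 x, g t) ^ (2:ℕ)
      ≤ ENNReal.ofReal (2 * Real.sqrt x) *
        ∫⁻ t in Set.Ioc 0 x, ENNReal.ofReal (Real.sqrt t) * g t ^ 2 := by
  set μ := volume.restrict (Set.Ioc (0:ℝ) x)
  have hmeas14 : Measurable fun t : ℝ => ENNReal.ofReal (t ^ (-(1/4:ℝ))) :=
    (measurable_id.pow_const _).ennreal_ofReal
  have hmeas14' : Measurable fun t : ℝ => ENNReal.ofReal (t ^ ((1/4:ℝ))) :=
    (measurable_id.pow_const _).ennreal_ofReal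
  have hae : ∀ᵐ t ∂μ, t ∈ Set.Ioc (0:ℝ) x := ae_restrict_mem measurableSet_Ioc
  -- pointwise factorization
  have hfac : ∀ᵐ t ∂μ, g t =
      (fun t => ENNReal.ofReal (t ^ (-(1/4:ℝ))) * (ENNReal.ofReal (t ^ ((1/4:ℝ))) * g t)) t := by
    filter_upwards [hae] with t ht
    have h1 : ENNReal.ofReal (t ^ (-(1/4:ℝ))) * ENNReal.ofReal (t ^ ((1/4:ℝ))) = 1 := by
      rw [← ENNReal.ofReal_mul (Real.rpow_nonneg ht.1.le _), ← Real.rpow_add ht.1]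
      norm_num
    rw [← mul_assoc, h1, one_mul]
  have hconj : Real.HolderConjugate 2 2 := ⟨by norm_num, by norm_num, by norm_num⟩
  have hH := ENNReal.lintegral_mul_le_Lp_mul_Lq μ hconj
    (hmeas14.aemeasurable) ((hmeas14'.mul hg).aemeasurable)
  rw [lintegral_congr_ae hfac]
  have hA : ∫⁻ t, (ENNReal.ofReal (t ^ (-(1/4:ℝ)))) ^ (2:ℝ) ∂μ
      = ENNReal.ofReal (2 * Real.sqrt x) := by
    have : ∀ᵐ t ∂μ, (ENNReal.ofReal (t ^ (-(1/4:ℝ)))) ^ (2:ℝ)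
        = ENNReal.ofReal (t ^ (-(1/2:ℝ))) := by
      filter_upwards [hae] with t ht
      rw [ENNReal.ofReal_rpow_of_nonneg (Real.rpow_nonneg ht.1.le _) (by norm_num),
        ← Real.rpow_mul ht.1.le]
      norm_num
    rw [lintegral_congr_ae this]
    rw [← ofReal_integral_eq_lintegral_ofReal]
    · congr 1
      have := integral_rpow (a := 0) (b := x) (r := -(1/2:ℝ)) (Or.inl (by norm_num))
      rw [intervalIntegral.integral_of_le hx.le] at this
      rw [this]
      rw [Real.zero_rpow (by norm_num), Real.sqrt_eq_rpow]
      ring_nf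
    · exact (intervalIntegral.intervalIntegrable_rpow' (by norm_num)).1
    · filter_upwards [hae] with t ht using Real.rpow_nonneg ht.1.le _
  have hB : ∫⁻ t, (ENNReal.ofReal (t ^ ((1/4:ℝ))) * g t) ^ (2:ℝ) ∂μ
      = ∫⁻ t, ENNReal.ofReal (Real.sqrt t) * g t ^ 2 ∂μ := by
    refine lintegral_congr_ae ?_
    filter_upwards [hae] with t ht
    rw [show (2:ℝ) = ((2:ℕ):ℝ) by norm_num, ENNReal.rpow_natCast, mul_pow,
      ← ENNReal.rpow_natCast (ENNReal.ofReal _) 2,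
      ENNReal.ofReal_rpow_of_nonneg (Real.rpow_nonneg ht.1.le _) (by norm_num),
      ← Real.rpow_mul ht.1.le, Real.sqrt_eq_rpow]
    norm_num
  calc (∫⁻ t, (fun t => ENNReal.ofReal (t ^ (-(1/4:ℝ))) *
          (ENNReal.ofReal (t ^ ((1/4:ℝ))) * g t)) t ∂μ) ^ (2:ℕ)
      ≤ ((∫⁻ t, (ENNReal.ofReal (t ^ (-(1/4:ℝ)))) ^ (2:ℝ) ∂μ) ^ (1/(2:ℝ)) *
        (∫⁻ t, (ENNReal.ofReal (t ^ ((1/4:ℝ))) * g t) ^ (2:ℝ) ∂μ) ^ (1/(2:ℝ))) ^ (2:ℕ) :=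
        pow_le_pow_left' hH 2
    _ = (∫⁻ t, (ENNReal.ofReal (t ^ (-(1/4:ℝ)))) ^ (2:ℝ) ∂μ) *
        (∫⁻ t, (ENNReal.ofReal (t ^ ((1/4:ℝ))) * g t) ^ (2:ℝ) ∂μ) := by
        rw [mul_pow, sq_rpow_half, sq_rpow_half]
    _ = ENNReal.ofReal (2 * Real.sqrt x) * ∫⁻ t in Set.Ioc 0 x,
          ENNReal.ofReal (Real.sqrt t) * g t ^ 2 := by rw [hA, hB]

lemma hardy_aux {b : ℝ} (hb : 0 < b) (g : ℝ → ℝ≥0∞) (hg : Measurable g) :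
    ∫⁻ x in Set.Ioc 0 b, (∫⁻ t in Set.Ioc 0 x, g t) ^ 2 / ENNReal.ofReal x ^ 2
      ≤ 4 * ∫⁻ t in Set.Ioc 0 b, g t ^ 2 := by
  set k : ℝ → ℝ≥0∞ := fun t => ENNReal.ofReal (Real.sqrt t) * g t ^ 2 with hk_def
  have hk : Measurable k :=
    (Real.continuous_sqrt.measurable.ennreal_ofReal).mul (hg.pow_const 2)
  set c : ℝ → ℝ≥0∞ := fun x => ENNReal.ofReal (2 * x ^ (-(3/2):ℝ)) with hc_def
  have hc : Measurable c := ((measurable_id.pow_const _).const_mul 2).ennreal_ofReal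
  -- step 1: pointwise bound
  have step1 : ∀ x ∈ Set.Ioc (0:ℝ) b,
      (∫⁻ t in Set.Ioc 0 x, g t) ^ 2 / ENNReal.ofReal x ^ 2
        ≤ c x * ∫⁻ t in Set.Ioc 0 x, k t := by
    intro x hx
    have h1 := cs_step hx.1 g hg
    have h2 : (∫⁻ t in Set.Ioc 0 x, g t) ^ 2 / ENNReal.ofReal x ^ 2
        ≤ ENNReal.ofReal (2 * Real.sqrt x) / ENNReal.ofReal x ^ 2
          * ∫⁻ t in Set.Ioc 0 x, k t := by
      rw [div_eq_mul_inv, div_eq_mul_inv, mul_right_comm]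
      exact mul_le_mul_left h1 _
    refine h2.trans (le_of_eq ?_)
    congr 1
    rw [← ENNReal.ofReal_pow hx.1.le, ← ENNReal.ofReal_div_of_pos (pow_pos hx.1 2)]
    congr 1
    rw [Real.sqrt_eq_rpow, mul_div_assoc, ← Real.rpow_natCast x 2,
      ← Real.rpow_sub hx.1]
    norm_num
  -- step 2+3: bound by double integral with indicator
  have step3 : ∫⁻ x in Set.Ioc 0 b, (∫⁻ t in Set.Ioc 0 x, g t) ^ 2 / ENNReal.ofReal x ^ 2
      ≤ ∫⁻ x in Set.Ioc 0 b, ∫⁻ t in Set.Ioc 0 b,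
          c x * (Set.Ioc 0 x).indicator k t := by
    refine lintegral_mono_ae ?_
    filter_upwards [ae_restrict_mem measurableSet_Ioc] with x hx
    refine (step1 x hx).trans (le_of_eq ?_)
    rw [lintegral_const_mul' _ _ ENNReal.ofReal_ne_top]
    congr 1
    rw [lintegral_indicator measurableSet_Ioc k, Measure.restrict_restrict measurableSet_Ioc,
      Set.inter_eq_left.mpr (Set.Ioc_subset_Ioc_right hx.2)]
  -- step 4: swap
  have hF : AEMeasurable (fun p : ℝ × ℝ => c p.1 * (Set.Ioc 0 p.1).indicator k p.2)
      ((volume.restrict (Set.Ioc 0 b)).prod (volume.restrict (Set.Ioc 0 b))) := by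
    have : (fun p : ℝ × ℝ => c p.1 * (Set.Ioc 0 p.1).indicator k p.2)
        = fun p : ℝ × ℝ => c p.1 *
          ({q : ℝ × ℝ | 0 < q.2 ∧ q.2 ≤ q.1}.indicator (fun q => k q.2) p) := by
      funext p
      congr 1
    rw [this]
    refine ((hc.comp measurable_fst).mul ((hk.comp measurable_snd).indicator ?_)).aemeasurable
    exact (measurableSet_lt measurable_const measurable_snd).inter
      (measurableSet_le measurable_snd measurable_fst)
  have step4 : ∫⁻ x in Set.Ioc 0 b, ∫⁻ t in Set.Ioc 0 b, c x * (Set.Ioc 0 x).indicator k t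
      = ∫⁻ t in Set.Ioc 0 b, ∫⁻ x in Set.Ioc 0 b, c x * (Set.Ioc 0 x).indicator k t :=
    lintegral_lintegral_swap hF
  -- step 5: inner integral bound
  have step5 : ∀ t ∈ Set.Ioc (0:ℝ) b,
      (∫⁻ x in Set.Ioc 0 b, c x * (Set.Ioc 0 x).indicator k t) ≤ 4 * g t ^ 2 := by
    intro t ht
    have hind : ∀ x : ℝ, c x * (Set.Ioc 0 x).indicator k t
        = (Set.Ici t).indicator (fun x => c x * k t) x := by
      intro x
      simp only [Set.indicator_apply, Set.mem_Ioc, Set.mem_Ici, ht.1, true_and]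
      by_cases h : t ≤ x <;> simp [h]
    calc ∫⁻ x in Set.Ioc 0 b, c x * (Set.Ioc 0 x).indicator k t
        = ∫⁻ x in Set.Icc t b, c x * k t := by
          simp_rw [hind]
          rw [lintegral_indicator measurableSet_Ici (fun x => c x * k t),
            Measure.restrict_restrict measurableSet_Ici]
          congr 2
          ext x
          simp only [Set.mem_inter_iff, Set.mem_Ici, Set.mem_Ioc, Set.mem_Icc]
          constructor
          · rintro ⟨h1, h2, h3⟩; exact ⟨h1, h3⟩
          · rintro ⟨h1, h2⟩; exact ⟨h1, lt_of_lt_of_le ht.1 h1, h2⟩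
      _ = (∫⁻ x in Set.Icc t b, c x) * k t := lintegral_mul_const _ hc
      _ ≤ ENNReal.ofReal (4 * t ^ (-(1/2):ℝ)) * k t := by
          refine mul_le_mul_left ?_ _
          rw [Measure.restrict_congr_set Ioc_ae_eq_Icc.symm]
          have hnot : (0:ℝ) ∉ Set.uIcc t b := by
            rw [Set.uIcc_of_le ht.2]
            rintro ⟨h1, -⟩
            exact absurd h1 (not_le.mpr ht.1)
          have hint : IntervalIntegrable (fun x : ℝ => 2 * x ^ (-(3/2):ℝ)) volume t b :=
            (intervalIntegral.intervalIntegrable_rpow (Or.inr hnot)).const_mul 2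
          rw [← ofReal_integral_eq_lintegral_ofReal (hint.1)
            ((ae_restrict_mem measurableSet_Ioc).mono fun x hx =>
              mul_nonneg (by norm_num) (Real.rpow_nonneg
                (le_of_lt (lt_trans ht.1 hx.1)) _))]
          · refine ENNReal.ofReal_le_ofReal ?_
            rw [← intervalIntegral.integral_of_le ht.2]
            rw [intervalIntegral.integral_const_mul]
            rw [integral_rpow (a := t) (b := b) (r := -(3/2:ℝ))
              (Or.inr ⟨by norm_num, hnot⟩)]
            have hbp : (0:ℝ) ≤ b ^ (-(1/2):ℝ) := Real.rpow_nonneg (le_of_lt (lt_of_lt_of_le ht.1 ht.2)) _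
            have : -(3/2:ℝ) + 1 = -(1/2:ℝ) := by norm_num
            rw [this]
            nlinarith [Real.rpow_nonneg (le_of_lt ht.1) (-(1/2):ℝ)]
      _ = 4 * g t ^ 2 := by
          rw [hk_def, ← mul_assoc, ← ENNReal.ofReal_mul
            (mul_nonneg (by norm_num) (Real.rpow_nonneg ht.1.le _))]
          have : 4 * t ^ (-(1/2):ℝ) * Real.sqrt t = 4 := by
            rw [Real.sqrt_eq_rpow, mul_assoc, ← Real.rpow_add ht.1]
            norm_num
          rw [this]
          norm_num
  calc ∫⁻ x in Set.Ioc 0 b, (∫⁻ t in Set.Ioc 0 x, g t) ^ 2 / ENNReal.ofReal x ^ 2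
      ≤ ∫⁻ t in Set.Ioc 0 b, ∫⁻ x in Set.Ioc 0 b, c x * (Set.Ioc 0 x).indicator k t := by
        rw [← step4]; exact step3
    _ ≤ ∫⁻ t in Set.Ioc 0 b, 4 * g t ^ 2 := by
        refine lintegral_mono_ae ?_
        filter_upwards [ae_restrict_mem measurableSet_Ioc] with t ht using step5 t ht
    _ = 4 * ∫⁻ t in Set.Ioc 0 b, g t ^ 2 :=
        lintegral_const_mul' _ _ (by norm_num)


lemma refl_lintegral (F : ℝ → ℝ≥0∞) (a b : ℝ) :
    ∫⁻ x in Set.Ioc a b, F x = ∫⁻ x in Set.Ico (-b) (-a), F (-x) := by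
  have hemb : MeasurableEmbedding (fun x : ℝ => -x) :=
    (Homeomorph.neg ℝ).measurableEmbedding
  have hmap : Measure.map (fun x : ℝ => -x) volume = volume :=
    Measure.map_neg_eq_self volume
  have hpre : (fun x : ℝ => -x) ⁻¹' Set.Ioc a b = Set.Ico (-b) (-a) := by
    ext x; simp [Set.mem_Ioc, Set.mem_Ico]
  rw [show volume.restrict (Set.Ioc a b)
      = Measure.map (fun x : ℝ => -x) (volume.restrict (Set.Ico (-b) (-a))) by
    rw [← hpre, ← Measure.restrict_map hemb.measurable measurableSet_Ioc, hmap]]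
  rw [hemb.lintegral_map]

lemma norm_exp_sub_one_sq {ψ : ℝ} (h1 : -π ≤ ψ) (h2 : ψ ≤ π) :
    4 * ψ^2 / π^2 ≤ ‖Complex.exp (Complex.I * ψ) - 1‖^2 := by
  have hexp : Complex.exp (Complex.I * ψ) - 1
      = ((Real.cos ψ - 1 : ℝ) : ℂ) + ((Real.sin ψ : ℝ) : ℂ) * Complex.I := by
    rw [mul_comm, Complex.exp_mul_I, ← Complex.ofReal_cos, ← Complex.ofReal_sin]
    push_cast
    ring
  have hnorm : ‖Complex.exp (Complex.I * ψ) - 1‖^2 = 2 - 2 * Real.cos ψ := by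
    rw [hexp, Complex.sq_norm, Complex.normSq_add_mul_I]
    nlinarith [Real.sin_sq_add_cos_sq ψ]
  rw [hnorm]
  have habs : |ψ| ≤ π := abs_le.mpr ⟨h1, h2⟩
  have h2pi : (0:ℝ) < π := Real.pi_pos
  have hsin : |ψ| / π ≤ Real.sin (|ψ| / 2) := by
    have := Real.mul_le_sin (x := |ψ| / 2) (by positivity) (by linarith)
    calc |ψ| / π = 2 / π * (|ψ| / 2) := by field_simp
      _ ≤ Real.sin (|ψ| / 2) := this
  have hsq : (|ψ| / π)^2 ≤ Real.sin (|ψ| / 2)^2 :=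
    pow_le_pow_left₀ (by positivity) hsin 2
  have heq : Real.sin (|ψ| / 2)^2 = Real.sin (ψ / 2)^2 := by
    rcases abs_choice ψ with h | h <;> rw [h]
    rw [neg_div, Real.sin_neg]
    ring
  have hhalf : Real.sin (ψ / 2)^2 = 1/2 - Real.cos ψ / 2 := by
    have := Real.sin_sq_eq_half_sub (x := ψ / 2)
    rwa [show 2 * (ψ/2) = ψ by ring] at this
  have : (|ψ| / π)^2 = ψ^2 / π^2 := by
    rw [div_pow, sq_abs]
  have h4 : 4 * ψ^2 / π^2 = 4 * (ψ^2 / π^2) := by ring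
  linarith [hsq, heq.symm ▸ hsq]


lemma ftc_aux (φ : ℝ → ℂ) (hφ : ContDiffOn ℝ 1 φ (Set.Icc (-π) π))
    {a b : ℝ} (hab : a ≤ b) (ha : -π ≤ a) (hb : b ≤ π) :
    ∫ t in a..b, derivWithin φ (Set.Icc (-π) π) t = φ b - φ a := by
  have hπ := Real.pi_pos
  have hlt : -π < π := by linarith
  have hsub : Set.Icc a b ⊆ Set.Icc (-π) π := Set.Icc_subset_Icc ha hb
  refine intervalIntegral.integral_eq_sub_of_hasDeriv_right_of_le hab
    (hφ.continuousOn.mono hsub) (fun t ht => ?_) ?_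
  · have hmem : Set.Icc (-π) π ∈ nhds t :=
      Icc_mem_nhds (by linarith [ht.1]) (by linarith [ht.2])
    have hd : DifferentiableWithinAt ℝ φ (Set.Icc (-π) π) t :=
      (hφ.differentiableOn one_ne_zero) t (hsub ⟨ht.1.le, ht.2.le⟩)
    have hda : HasDerivAt φ (deriv φ t) t := (hd.differentiableAt hmem).hasDerivAt
    rw [derivWithin_of_mem_nhds hmem]
    exact hda.hasDerivWithinAt
  · refine ContinuousOn.intervalIntegrable ?_
    rw [Set.uIcc_of_le hab]
    exact (hφ.continuousOn_derivWithin (uniqueDiffOn_Icc hlt) le_rfl).mono hsub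


lemma ptwise_bound {z w : ℂ} {x : ℝ} (hx : 0 < x)
    (hw : 4 * x^2 / π^2 ≤ ‖w‖^2) (G : ℝ≥0∞) (hz : ENNReal.ofReal ‖z‖ ≤ G) :
    ENNReal.ofReal (‖z / w‖^2)
      ≤ ENNReal.ofReal (π^2/4) * G^2 / (ENNReal.ofReal x)^2 := by
  have hπ := Real.pi_pos
  have hw0 : 0 < ‖w‖^2 := lt_of_lt_of_le (by positivity) hw
  have hreal : ‖z / w‖^2 ≤ π^2/4 * (‖z‖^2 / x^2) := by
    rw [norm_div, div_pow]
    calc ‖z‖^2/‖w‖^2 ≤ ‖z‖^2 / (4*x^2/π^2) :=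
          div_le_div_of_nonneg_left (by positivity) (by positivity) hw
      _ = π^2/4 * (‖z‖^2/x^2) := by field_simp
  calc ENNReal.ofReal (‖z/w‖^2) ≤ ENNReal.ofReal (π^2/4 * (‖z‖^2/x^2)) :=
        ENNReal.ofReal_le_ofReal hreal
    _ = ENNReal.ofReal (π^2/4) * (ENNReal.ofReal ‖z‖)^2 / (ENNReal.ofReal x)^2 := by
        rw [ENNReal.ofReal_mul (by positivity), ENNReal.ofReal_div_of_pos (pow_pos hx 2),
          ENNReal.ofReal_pow (norm_nonneg z), ENNReal.ofReal_pow hx.le, mul_div_assoc]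
    _ ≤ ENNReal.ofReal (π^2/4) * G^2 / (ENNReal.ofReal x)^2 :=
        ENNReal.div_le_div_right (mul_le_mul_right (pow_le_pow_left' hz 2) _) _

/-- Hardy inequality on `[−π,π]`: for `φ` continuously differentiable
with `φ(0) = 0`, `∫_{−π}^{π} |φ(ψ)/(e^{iψ} − 1)|² dψ ≤ π² ∫_{−π}^{π} |φ′(ψ)|² dψ`. -/
theorem hardy_inequality_interval (φ : ℝ → ℂ)
    (hφ : ContDiffOn ℝ 1 φ (Set.Icc (-π) π)) (h0 : φ 0 = 0) :
    (∫ ψ in (-π)..π, ‖φ ψ / (Complex.exp (Complex.I * (ψ : ℂ)) - 1)‖ ^ 2)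
      ≤ π ^ 2 * ∫ ψ in (-π)..π, ‖derivWithin φ (Set.Icc (-π) π) ψ‖ ^ 2 := by

  have hπ : (0:ℝ) < π := Real.pi_pos
  have hlt : -π < π := by linarith
  set D : ℝ → ℂ := fun t => derivWithin φ (Set.Icc (-π) π) t with hD_def
  have hDcont : ContinuousOn D (Set.Icc (-π) π) :=
    hφ.continuousOn_derivWithin (uniqueDiffOn_Icc hlt) le_rfl
  -- continuous extension of ‖D‖
  set fb : ℝ → ℝ := fun t => ‖D ((Set.projIcc (-π) π hlt.le t) : ℝ)‖ with hfb_def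
  have hfb_cont : Continuous fb := by
    have hp : Continuous fun t : ℝ => ((Set.projIcc (-π) π hlt.le t : ℝ)) :=
      continuous_subtype_val.comp continuous_projIcc
    exact (hDcont.norm).comp_continuous hp (fun x => (Set.projIcc (-π) π hlt.le x).2)
  have hfb_nonneg : ∀ t, 0 ≤ fb t := fun t => norm_nonneg _
  have hfb_eq : ∀ t ∈ Set.Icc (-π) π, fb t = ‖D t‖ := by
    intro t ht
    rw [hfb_def]
    simp only [Set.projIcc_of_mem hlt.le ht]
  set g : ℝ → ℝ≥0∞ := fun t => ENNReal.ofReal (fb t) with hg_def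
  have hg : Measurable g := hfb_cont.measurable.ennreal_ofReal
  set g2 : ℝ → ℝ≥0∞ := fun u => ENNReal.ofReal (fb (-u)) with hg2_def
  have hg2 : Measurable g2 := (hfb_cont.comp continuous_neg).measurable.ennreal_ofReal
  set h : ℝ → ℝ := fun ψ => ‖φ ψ / (Complex.exp (Complex.I * (ψ : ℂ)) - 1)‖ ^ 2 with hh_def
  -- FTC norm bounds, in ENNReal form
  have key_pos : ∀ ψ ∈ Set.Ioc (0:ℝ) π,
      ENNReal.ofReal ‖φ ψ‖ ≤ ∫⁻ t in Set.Ioc 0 ψ, g t := by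
    intro ψ hψ
    have h1 : φ ψ = ∫ t in (0:ℝ)..ψ, D t := by
      rw [ftc_aux φ hφ hψ.1.le (by linarith) hψ.2, h0, sub_zero]
    have h2 : ‖φ ψ‖ ≤ ∫ t in (0:ℝ)..ψ, fb t := by
      rw [h1]
      refine (intervalIntegral.norm_integral_le_integral_norm hψ.1.le).trans (le_of_eq ?_)
      refine intervalIntegral.integral_congr (fun t ht => ?_)
      rw [Set.uIcc_of_le hψ.1.le] at ht
      exact (hfb_eq t ⟨by linarith [ht.1], by linarith [ht.2, hψ.2]⟩).symm
    refine (ENNReal.ofReal_le_ofReal h2).trans (le_of_eq ?_)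
    rw [intervalIntegral.integral_of_le hψ.1.le,
      ofReal_integral_eq_lintegral_ofReal ((hfb_cont.intervalIntegrable 0 ψ).1)
        (Filter.Eventually.of_forall (fun t => hfb_nonneg t))]
  have key_neg : ∀ x ∈ Set.Ioc (0:ℝ) π,
      ENNReal.ofReal ‖φ (-x)‖ ≤ ∫⁻ t in Set.Ioc 0 x, g2 t := by
    intro x hx
    have h1 : φ (-x) = -∫ t in (-x)..(0:ℝ), D t := by
      rw [ftc_aux φ hφ (by linarith [hx.1]) (by linarith [hx.2]) hπ.le, h0]
      ring
    have h2 : ‖φ (-x)‖ ≤ ∫ u in (0:ℝ)..x, fb (-u) := by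
      rw [h1, norm_neg]
      have hcn : ∫ u in (0:ℝ)..x, fb (-u) = ∫ t in (-x)..(-(0:ℝ)), fb t :=
        intervalIntegral.integral_comp_neg fb
      rw [neg_zero] at hcn
      rw [hcn]
      refine (intervalIntegral.norm_integral_le_integral_norm (by linarith [hx.1])).trans
        (le_of_eq ?_)
      refine intervalIntegral.integral_congr (fun t ht => ?_)
      rw [Set.uIcc_of_le (by linarith [hx.1] : -x ≤ (0:ℝ))] at ht
      exact (hfb_eq t ⟨by linarith [ht.1, hx.2], by linarith [ht.2]⟩).symm
    refine (ENNReal.ofReal_le_ofReal h2).trans (le_of_eq ?_)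
    have hint : IntegrableOn (fun u : ℝ => fb (-u)) (Set.Ioc 0 x) := by
      exact ((hfb_cont.comp continuous_neg).intervalIntegrable 0 x).1
    rw [intervalIntegral.integral_of_le hx.1.le,
      ofReal_integral_eq_lintegral_ofReal hint
        (Filter.Eventually.of_forall (fun t => hfb_nonneg (-t)))]
  -- positive half estimate
  have est_pos : ∫⁻ ψ in Set.Ioc 0 π, ENNReal.ofReal (h ψ)
      ≤ ENNReal.ofReal (π^2/4) * (4 * ∫⁻ t in Set.Ioc 0 π, g t ^ 2) := by
    have step : ∫⁻ ψ in Set.Ioc 0 π, ENNReal.ofReal (h ψ)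
        ≤ ∫⁻ ψ in Set.Ioc 0 π, ENNReal.ofReal (π^2/4)
            * (∫⁻ t in Set.Ioc 0 ψ, g t) ^ 2 / (ENNReal.ofReal ψ)^2 := by
      refine lintegral_mono_ae ?_
      filter_upwards [ae_restrict_mem measurableSet_Ioc] with ψ hψ
      exact ptwise_bound hψ.1
        (norm_exp_sub_one_sq (by linarith [hψ.1]) hψ.2) _ (key_pos ψ hψ)
    refine step.trans ?_
    have : ∫⁻ ψ in Set.Ioc 0 π, ENNReal.ofReal (π^2/4)
          * (∫⁻ t in Set.Ioc 0 ψ, g t) ^ 2 / (ENNReal.ofReal ψ)^2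
        = ENNReal.ofReal (π^2/4) * ∫⁻ ψ in Set.Ioc 0 π,
            (∫⁻ t in Set.Ioc 0 ψ, g t) ^ 2 / (ENNReal.ofReal ψ)^2 := by
      rw [← lintegral_const_mul' _ _ ENNReal.ofReal_ne_top]
      congr 1
      funext ψ
      rw [mul_div_assoc]
    rw [this]
    exact mul_le_mul_right (hardy_aux hπ g hg) _
  -- negative half estimate
  have est_neg : ∫⁻ ψ in Set.Ioc (-π) 0, ENNReal.ofReal (h ψ)
      ≤ ENNReal.ofReal (π^2/4) * (4 * ∫⁻ t in Set.Ioc (-π) 0, g t ^ 2) := by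
    have hrefl : ∫⁻ ψ in Set.Ioc (-π) 0, ENNReal.ofReal (h ψ)
        = ∫⁻ x in Set.Ioc 0 π, ENNReal.ofReal (h (-x)) := by
      rw [refl_lintegral (fun ψ => ENNReal.ofReal (h ψ)) (-π) 0, neg_zero, neg_neg,
        Measure.restrict_congr_set Ico_ae_eq_Ioc]
    have hrefl2 : ∫⁻ t in Set.Ioc (-π) 0, g t ^ 2
        = ∫⁻ t in Set.Ioc 0 π, g2 t ^ 2 := by
      rw [refl_lintegral (fun t => g t ^ 2) (-π) 0, neg_zero, neg_neg,
        Measure.restrict_congr_set Ico_ae_eq_Ioc]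
    rw [hrefl, hrefl2]
    have step : ∫⁻ x in Set.Ioc 0 π, ENNReal.ofReal (h (-x))
        ≤ ∫⁻ x in Set.Ioc 0 π, ENNReal.ofReal (π^2/4)
            * (∫⁻ t in Set.Ioc 0 x, g2 t) ^ 2 / (ENNReal.ofReal x)^2 := by
      refine lintegral_mono_ae ?_
      filter_upwards [ae_restrict_mem measurableSet_Ioc] with x hx
      have hden : 4 * x^2 / π^2
          ≤ ‖Complex.exp (Complex.I * ((-x : ℝ) : ℂ)) - 1‖^2 := by
        have := norm_exp_sub_one_sq (ψ := -x) (by linarith [hx.2]) (by linarith [hx.1])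
        rwa [neg_sq] at this
      exact ptwise_bound hx.1 hden _ (key_neg x hx)
    refine step.trans ?_
    have : ∫⁻ x in Set.Ioc 0 π, ENNReal.ofReal (π^2/4)
          * (∫⁻ t in Set.Ioc 0 x, g2 t) ^ 2 / (ENNReal.ofReal x)^2
        = ENNReal.ofReal (π^2/4) * ∫⁻ x in Set.Ioc 0 π,
            (∫⁻ t in Set.Ioc 0 x, g2 t) ^ 2 / (ENNReal.ofReal x)^2 := by
      rw [← lintegral_const_mul' _ _ ENNReal.ofReal_ne_top]
      congr 1
      funext x
      rw [mul_div_assoc]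
    rw [this]
    exact mul_le_mul_right (hardy_aux hπ g2 hg2) _
  -- combine halves
  have hunion : Set.Ioc (-π) 0 ∪ Set.Ioc 0 π = Set.Ioc (-π) π :=
    Set.Ioc_union_Ioc_eq_Ioc (by linarith) (by linarith)
  have hdisj : Disjoint (Set.Ioc (-π) 0) (Set.Ioc 0 π) := by
    refine Set.disjoint_left.mpr (fun t ht1 ht2 => ?_)
    exact absurd ht1.2 (not_le.mpr ht2.1)
  have hsplit : ∀ F : ℝ → ℝ≥0∞, ∫⁻ t in Set.Ioc (-π) π, F t
      = (∫⁻ t in Set.Ioc (-π) 0, F t) + ∫⁻ t in Set.Ioc 0 π, F t := by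
    intro F
    rw [← hunion, lintegral_union measurableSet_Ioc hdisj]
  have hL : ∫⁻ ψ in Set.Ioc (-π) π, ENNReal.ofReal (h ψ)
      ≤ ENNReal.ofReal (π^2) * ∫⁻ t in Set.Ioc (-π) π, g t ^ 2 := by
    rw [hsplit (fun ψ => ENNReal.ofReal (h ψ)), hsplit (fun t => g t ^ 2)]
    have h4 : ENNReal.ofReal (π^2/4) * 4 = ENNReal.ofReal (π^2) := by
      rw [show (4:ℝ≥0∞) = ENNReal.ofReal 4 from (ENNReal.ofReal_ofNat 4).symm,
        ← ENNReal.ofReal_mul (by positivity)]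
      norm_num
    calc (∫⁻ ψ in Set.Ioc (-π) 0, ENNReal.ofReal (h ψ))
          + ∫⁻ ψ in Set.Ioc 0 π, ENNReal.ofReal (h ψ)
        ≤ ENNReal.ofReal (π^2/4) * (4 * ∫⁻ t in Set.Ioc (-π) 0, g t ^ 2)
          + ENNReal.ofReal (π^2/4) * (4 * ∫⁻ t in Set.Ioc 0 π, g t ^ 2) :=
          add_le_add est_neg est_pos
      _ = ENNReal.ofReal (π^2) * ((∫⁻ t in Set.Ioc (-π) 0, g t ^ 2)
            + ∫⁻ t in Set.Ioc 0 π, g t ^ 2) := by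
          rw [← mul_assoc, ← mul_assoc, ← mul_add, h4]
  -- convert to real integrals
  have hφ_aesm : AEMeasurable φ (volume.restrict (Set.Ioc (-π) π)) :=
    (hφ.continuousOn.mono Set.Ioc_subset_Icc_self).aemeasurable measurableSet_Ioc
  have hden_meas : Measurable fun ψ : ℝ => Complex.exp (Complex.I * (ψ:ℂ)) - 1 := by
    fun_prop
  have hh_aesm : AEStronglyMeasurable h (volume.restrict (Set.Ioc (-π) π)) :=
    AEMeasurable.aestronglyMeasurable
      ((hφ_aesm.div hden_meas.aemeasurable).norm.pow_const 2)
  have hLHS : (∫ ψ in (-π)..π, h ψ)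
      = (∫⁻ ψ in Set.Ioc (-π) π, ENNReal.ofReal (h ψ)).toReal := by
    rw [intervalIntegral.integral_of_le hlt.le,
      integral_eq_lintegral_of_nonneg_ae
        (Filter.Eventually.of_forall (fun ψ => pow_nonneg (norm_nonneg _) 2)) hh_aesm]
  have hDsm : AEStronglyMeasurable (fun ψ => ‖D ψ‖^2) (volume.restrict (Set.Ioc (-π) π)) :=
    (((hDcont.norm).pow 2).mono Set.Ioc_subset_Icc_self).aestronglyMeasurable
      measurableSet_Ioc
  have hgg : ∫⁻ ψ in Set.Ioc (-π) π, ENNReal.ofReal (‖D ψ‖^2)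
      = ∫⁻ t in Set.Ioc (-π) π, g t ^ 2 := by
    refine lintegral_congr_ae ?_
    filter_upwards [ae_restrict_mem measurableSet_Ioc] with t ht
    rw [← hfb_eq t (Set.Ioc_subset_Icc_self ht), hg_def, ← ENNReal.ofReal_pow (hfb_nonneg t)]
  have hRHS : (∫ ψ in (-π)..π, ‖D ψ‖^2)
      = (∫⁻ t in Set.Ioc (-π) π, g t ^ 2).toReal := by
    rw [intervalIntegral.integral_of_le hlt.le,
      integral_eq_lintegral_of_nonneg_ae
        (Filter.Eventually.of_forall (fun ψ => pow_nonneg (norm_nonneg _) 2)) hDsm, hgg]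
  have hfin : ∫⁻ t in Set.Ioc (-π) π, g t ^ 2 ≠ ⊤ := by
    have heq2 : ∫⁻ t in Set.Ioc (-π) π, g t ^ 2
        = ENNReal.ofReal (∫ t in Set.Ioc (-π) π, fb t ^ 2) := by
      rw [ofReal_integral_eq_lintegral_ofReal (f := fun t => fb t ^ 2)
        (by exact (hfb_cont.pow 2).integrableOn_Ioc)
        (Filter.Eventually.of_forall fun t => sq_nonneg _)]
      exact lintegral_congr (fun t => by rw [hg_def, ← ENNReal.ofReal_pow (hfb_nonneg t)])
    rw [heq2]
    exact ENNReal.ofReal_ne_top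
  show (∫ ψ in (-π)..π, h ψ) ≤ π ^ 2 * ∫ ψ in (-π)..π, ‖D ψ‖^2
  rw [hLHS, hRHS]
  calc (∫⁻ ψ in Set.Ioc (-π) π, ENNReal.ofReal (h ψ)).toReal
      ≤ (ENNReal.ofReal (π^2) * ∫⁻ t in Set.Ioc (-π) π, g t ^ 2).toReal :=
        ENNReal.toReal_mono (ENNReal.mul_ne_top ENNReal.ofReal_ne_top hfin) hL
    _ = π^2 * (∫⁻ t in Set.Ioc (-π) π, g t ^ 2).toReal := by
        rw [ENNReal.toReal_mul, ENNReal.toReal_ofReal (sq_nonneg π)]
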